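/- Half-open cone decomposition: Let a_1,...,a_p be a basis of ℝ^p, let ε_1,...,ε_p ∈ {0,1}, and define C := ∑_{i∈[p]} R^+_{ε_i} a_i, where R^+_0 = (0,∞) and R^+_1 = [0,∞). Let w = w_1 a_1 + ⋯ + w_p a_p with w_i > 0 for i ∈ [k] and w_i = 0 for i ∈ [p]\[k], where k ∈ [p]. Suppose ε_{ij} ∈ {0,1} (i ∈ [k], j ∈ [p]) satisfy conditions (i)–(v) of the sign-pattern lemma: ε_{ij}=ε_j for j ∉ [k]; ε_{ii}=ε_i; ε_{ij}+ε_{ji}=1 for distinct i,j ∈ [k]; ε_i=1 implies ε_{ij} ≤ ε_j for all j ∈ [k]; and every nonempty J ⊆ [k] contains some i with ε_{ij}=1 for all j ∈ J\{i}. Define C_i := R^+_{ε_{ii}} w + ∑_{j ≠ i} R^+_{ε_{ij}} a_j for i ∈ [k]. Then C is the disjoint union of C_1, ..., C_k; equivalently, the indicator functions satisfy 1_C = ∑_{i∈[k]} 1_{C_i}. -/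

import Mathlib

/-- `R^+_0 = (0,∞)`, `R^+_1 = [0,∞)`. -/
def Rplus (e : ℕ) : Set ℝ := if e = 1 then Set.Ici 0 else Set.Ioi 0

lemma mem_Rplus_iff {e : ℕ} (he : e ≤ 1) {x : ℝ} :
    x ∈ Rplus e ↔ 0 ≤ x ∧ (e = 0 → 0 < x) := by
  unfold Rplus
  rcases Nat.le_one_iff_eq_zero_or_eq_one.mp he with h | h <;> subst h <;> simp
  exact fun h => h.le

theorem stmt17 (p k : ℕ) (hp : 1 ≤ p) (hk1 : 1 ≤ k) (hkp : k ≤ p)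
    (a : Fin p → (Fin p → ℝ)) (hli : LinearIndependent ℝ a)
    (hspan : Submodule.span ℝ (Set.range a) = ⊤)
    (ε : Fin p → ℕ) (hε : ∀ i, ε i ≤ 1)
    (w : Fin p → ℝ)
    (hw : ∀ i : Fin p, (i.val < k → 0 < w i) ∧ (k ≤ i.val → w i = 0))
    (E : Fin p → Fin p → ℕ) (hE01 : ∀ i j, E i j ≤ 1)
    (h1 : ∀ i j : Fin p, i.val < k → k ≤ j.val → E i j = ε j)
    (h2 : ∀ i : Fin p, i.val < k → E i i = ε i)
    (h3 : ∀ i j : Fin p, i.val < k → j.val < k → i ≠ j → E i j + E j i = 1)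
    (h4 : ∀ i : Fin p, i.val < k → ε i = 1 → ∀ j : Fin p, j.val < k → E i j ≤ ε j)
    (h5 : ∀ J : Finset (Fin p), J.Nonempty → (∀ j ∈ J, j.val < k) →
      ∃ i ∈ J, ∀ j ∈ J, j ≠ i → E i j = 1)
    (wv : Fin p → ℝ) (hwv : wv = ∑ i, w i • a i)
    (C : Set (Fin p → ℝ))
    (hC : C = {x | ∃ t : Fin p → ℝ, (∀ i, t i ∈ Rplus (ε i)) ∧ x = ∑ i, t i • a i})
    (Ci : Fin p → Set (Fin p → ℝ))
    (hCi : ∀ i : Fin p, Ci i =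
      {x | ∃ t : Fin p → ℝ, t i ∈ Rplus (E i i) ∧
        (∀ jj : Fin p, jj ≠ i → t jj ∈ Rplus (E i jj)) ∧
        x = t i • wv + ∑ jj ∈ Finset.univ.erase i, t jj • a jj}) :
    (∀ x, x ∈ C ↔ ∃ i : Fin p, i.val < k ∧ x ∈ Ci i) ∧
    (∀ i j : Fin p, i.val < k → j.val < k → i ≠ j → Disjoint (Ci i) (Ci j)) := by
  have hspan' : ⊤ ≤ Submodule.span ℝ (Set.range a) := le_of_eq hspan.symm
  set b : Module.Basis (Fin p) ℝ (Fin p → ℝ) := Module.Basis.mk hli hspan' with hbdef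
  have hb : ∀ i, b i = a i := fun i => Module.Basis.mk_apply hli hspan' i
  have hrepr : ∀ t : Fin p → ℝ, ∀ j, b.repr (∑ i, t i • a i) j = t j := by
    intro t j
    have h : (∑ i, t i • a i) = ∑ i, t i • b i := by simp only [hb]
    rw [h, b.repr_sum_self]
  set s : (Fin p → ℝ) → Fin p → ℝ := fun x j => b.repr x j with hsdef
  have hsum : ∀ x : Fin p → ℝ, x = ∑ j, s x j • a j := by
    intro x
    conv_lhs => rw [← b.sum_repr x]
    simp only [hb, hsdef]
  -- membership in C in coordinates
  have hCmem : ∀ x : Fin p → ℝ, x ∈ C ↔ ∀ j, s x j ∈ Rplus (ε j) := by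
    intro x
    rw [hC]
    constructor
    · rintro ⟨t, ht, rfl⟩ j
      have := hrepr t j
      simpa [hsdef, this] using ht j
    · intro h
      exact ⟨fun j => s x j, h, hsum x⟩
  -- the combination in Ci i rewritten as a plain basis combination
  have hcomb : ∀ (t : Fin p → ℝ) (i : Fin p),
      t i • wv + ∑ jj ∈ Finset.univ.erase i, t jj • a jj
        = ∑ j, (t i * w j + (if j = i then 0 else t j)) • a j := by
    intro t i
    have h1' : t i • wv = ∑ j, (t i * w j) • a j := by
      rw [hwv, Finset.smul_sum]
      exact Finset.sum_congr rfl fun j _ => by rw [smul_smul]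
    have h2' : (∑ j, (if j = i then 0 else t j) • a j)
        = ∑ jj ∈ Finset.univ.erase i, t jj • a jj := by
      rw [← Finset.sum_erase (f := fun j => (if j = i then 0 else t j) • a j)
        (a := i) Finset.univ (by simp)]
      exact Finset.sum_congr rfl fun j hj => by
        simp only [if_neg (Finset.ne_of_mem_erase hj)]
    rw [h1', ← h2', ← Finset.sum_add_distrib]
    exact Finset.sum_congr rfl fun j _ => (add_smul _ _ _).symm
  -- membership in Ci i in coordinates, for i < k
  have hCimem : ∀ (x : Fin p → ℝ) (i : Fin p), i.val < k →
      (x ∈ Ci i ↔ (s x i / w i ∈ Rplus (E i i)) ∧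
        ∀ j, j ≠ i → s x j - (s x i / w i) * w j ∈ Rplus (E i j)) := by
    intro x i hik
    have hwi : w i ≠ 0 := ((hw i).1 hik).ne'
    rw [hCi i]
    constructor
    · rintro ⟨t, hti, htj, rfl⟩
      have hs : ∀ j, s (t i • wv + ∑ jj ∈ Finset.univ.erase i, t jj • a jj) j
          = t i * w j + (if j = i then 0 else t j) := by
        intro j
        rw [hcomb t i]
        exact hrepr _ j
      have hsi : s (t i • wv + ∑ jj ∈ Finset.univ.erase i, t jj • a jj) i
          = t i * w i := by rw [hs i]; simp
      have hdiv : s (t i • wv + ∑ jj ∈ Finset.univ.erase i, t jj • a jj) i / w i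
          = t i := by rw [hsi]; field_simp
      refine ⟨by rwa [hdiv], fun j hj => ?_⟩
      rw [hdiv, hs j, if_neg hj]
      simpa using htj j hj
    · rintro ⟨hti, htj⟩
      set ti := s x i / w i with htidef
      refine ⟨Function.update (fun j => s x j - ti * w j) i ti,
        by simpa using hti, fun j hj => by
        simpa [Function.update_of_ne hj] using htj j hj, ?_⟩
      rw [hcomb (Function.update (fun j => s x j - ti * w j) i ti) i]
      conv_lhs => rw [hsum x]
      refine Finset.sum_congr rfl fun j _ => ?_
      by_cases hji : j = i
      · subst hji
        simp [Function.update_self, htidef, div_mul_cancel₀ _ hwi]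
      · rw [Function.update_self, Function.update_of_ne hji, if_neg hji]
        congr 1
        ring
  -- coordinate ratios
  set ρ : (Fin p → ℝ) → Fin p → ℝ := fun x j => s x j / w j with hρdef
  have hsρ : ∀ x, ∀ j : Fin p, j.val < k → s x j = ρ x j * w j := by
    intro x j hj
    have : w j ≠ 0 := ((hw j).1 hj).ne'
    simp only [hρdef]; exact (div_mul_cancel₀ _ this).symm
  constructor
  · intro x
    constructor
    · -- x ∈ C → ∃ i
      intro hx
      have hsx := (hCmem x).mp hx
      -- the set of indices < k
      set S : Finset (Fin p) := Finset.univ.filter (fun i => i.val < k) with hSdef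
      have hS : S.Nonempty := ⟨⟨0, lt_of_lt_of_le hk1 hkp⟩, by
        simp only [hSdef, Finset.mem_filter, Finset.mem_univ, true_and]
        omega⟩
      set m := S.inf' hS (ρ x) with hmdef
      set J : Finset (Fin p) := S.filter (fun i => ρ x i = m) with hJdef
      obtain ⟨i0, hi0S, hi0m⟩ := Finset.exists_mem_eq_inf' hS (ρ x)
      have hJne : J.Nonempty := ⟨i0, by simp [hJdef, hi0S, hi0m.symm, hmdef]⟩
      have hJk : ∀ j ∈ J, j.val < k := by
        intro j hj
        simp only [hJdef, hSdef, Finset.mem_filter, Finset.mem_univ, true_and] at hj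
        exact hj.1
      obtain ⟨i, hiJ, hiE⟩ := h5 J hJne hJk
      have hik : i.val < k := hJk i hiJ
      have hρi : ρ x i = m := by
        simp only [hJdef, Finset.mem_filter] at hiJ
        exact hiJ.2
      have hmin : ∀ j : Fin p, j.val < k → m ≤ ρ x j := by
        intro j hj
        exact hmdef ▸ Finset.inf'_le _ (by simp [hSdef, hj])
      refine ⟨i, hik, (hCimem x i hik).mpr ⟨?_, ?_⟩⟩
      · -- s x i / w i ∈ Rplus (E i i) = Rplus (ε i)
        rw [h2 i hik]
        have hwi := (hw i).1 hik
        have := hsx i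
        rw [mem_Rplus_iff (hε i)] at this ⊢
        exact ⟨div_nonneg this.1 hwi.le, fun h0 => div_pos (this.2 h0) hwi⟩
      · intro j hj
        by_cases hjk : j.val < k
        · -- j < k
          have hwj := (hw j).1 hjk
          have heq : s x j - s x i / w i * w j = w j * (ρ x j - ρ x i) := by
            rw [hsρ x j hjk]
            simp only [hρdef]
            ring
          rw [heq, mem_Rplus_iff (hE01 i j)]
          by_cases hjJ : j ∈ J
          · have hρj : ρ x j = m := by
              simp only [hJdef, Finset.mem_filter] at hjJ
              exact hjJ.2
            have hE1 : E i j = 1 := hiE j hjJ hj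
            rw [hρj, hρi]
            simp [hE1]
          · have hρj : m < ρ x j := by
              rcases lt_or_eq_of_le (hmin j hjk) with h | h
              · exact h
              · exact absurd (by simp [hJdef, hSdef, hjk, h.symm]) hjJ
            have : 0 < w j * (ρ x j - ρ x i) := by
              rw [hρi]; exact mul_pos hwj (by linarith)
            exact ⟨this.le, fun _ => this⟩
        · -- j ≥ k : w j = 0
          push_neg at hjk
          have hwj : w j = 0 := (hw j).2 hjk
          rw [hwj, mul_zero, sub_zero, h1 i j hik hjk]
          exact hsx j
    · -- reverse: x ∈ Ci i → x ∈ C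
      rintro ⟨i, hik, hxi⟩
      obtain ⟨hti, htj⟩ := (hCimem x i hik).mp hxi
      rw [h2 i hik, mem_Rplus_iff (hε i)] at hti
      have hwi := (hw i).1 hik
      rw [hCmem x]
      intro j
      rw [mem_Rplus_iff (hε j)]
      by_cases hji : j = i
      · subst hji
        have hsj : s x j = (s x j / w j) * w j := by field_simp
        constructor
        · rw [hsj]; exact mul_nonneg hti.1 hwi.le
        · intro h0
          rw [hsj]; exact mul_pos (hti.2 h0) hwi
      · have hd := htj j hji
        rw [mem_Rplus_iff (hE01 i j)] at hd
        by_cases hjk : j.val < k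
        · have hwj := (hw j).1 hjk
          have key : s x j = (s x i / w i) * w j + (s x j - (s x i / w i) * w j) := by ring
          constructor
          · rw [key]
            exact add_nonneg (mul_nonneg hti.1 hwj.le) hd.1
          · intro h0
            rcases Nat.le_one_iff_eq_zero_or_eq_one.mp (hε i) with hei | hei
            · rw [key]
              have := hti.2 hei
              nlinarith [hd.1]
            · have hE0 : E i j = 0 := Nat.le_zero.mp (h0 ▸ h4 i hik hei j hjk)
              have := hd.2 hE0
              nlinarith [mul_nonneg hti.1 hwj.le]
        · push_neg at hjk
          have hwj : w j = 0 := (hw j).2 hjk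
          rw [hwj, mul_zero, sub_zero, h1 i j hik hjk] at hd
          exact hd
  · -- disjointness
    intro i j hik hjk hij
    rw [Set.disjoint_left]
    intro x hxi hxj
    obtain ⟨_, hti⟩ := (hCimem x i hik).mp hxi
    obtain ⟨_, htj⟩ := (hCimem x j hjk).mp hxj
    have hwi := (hw i).1 hik
    have hwj := (hw j).1 hjk
    have hdi := hti j (Ne.symm hij)
    have hdj := htj i hij
    rw [mem_Rplus_iff (hE01 i j)] at hdi
    rw [mem_Rplus_iff (hE01 j i)] at hdj
    have heqi : s x j - s x i / w i * w j = w j * (ρ x j - ρ x i) := by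
      rw [hsρ x j hjk]; simp only [hρdef]; ring
    have heqj : s x i - s x j / w j * w i = w i * (ρ x i - ρ x j) := by
      rw [hsρ x i hik]; simp only [hρdef]; ring
    rw [heqi] at hdi
    rw [heqj] at hdj
    have h3' := h3 i j hik hjk hij
    rcases Nat.le_one_iff_eq_zero_or_eq_one.mp (hE01 i j) with h | h
    · have hEji : E j i = 1 := by omega
      have hpos := hdi.2 h
      nlinarith [hdj.1]
    · have hEji : E j i = 0 := by omega
      have hpos := hdj.2 hEji
      nlinarith [hdi.1]
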